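/- arXiv:1210.7780 — 6 statements merged into one kernel-verified Lean document; each statement's English description precedes it below -/
import Mathlib

section
/- For nonzero Laurent polynomials f and g in n variables over ℂ and any ν ∈ ℤⁿ, deg_ν(f·g) = deg_ν(f) + deg_ν(g). -/
/-- The ν-weighted degree of a multivariate Laurent polynomial. -/
noncomputable def wdegL {n : ℕ} (ν : Fin n → ℤ) (f : AddMonoidAlgebra ℂ (Fin n → ℤ)) : WithBot ℤ :=
  f.coeff.support.sup fun m => ((∑ i, ν i * m i : ℤ) : WithBot ℤ)

/-- for nonzero Laurent polynomials, deg_ν(f·g) = deg_ν f + deg_ν g. -/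
theorem wdeg_mul {n : ℕ} (ν : Fin n → ℤ) (f g : AddMonoidAlgebra ℂ (Fin n → ℤ))
    (hf : f ≠ 0) (hg : g ≠ 0) :
    wdegL ν (f * g) = wdegL ν f + wdegL ν g := by
  classical
  haveI : WellFoundedLT (Fin n) := Finite.to_wellFoundedLT
  set w : (Fin n → ℤ) → ℤ := fun m => ∑ i, ν i * m i with hw
  have hwadd : ∀ a b, w (a + b) = w a + w b := by
    intro a b
    simp [hw, mul_add, Finset.sum_add_distrib]
  set D : (Fin n → ℤ) → ℤ ×ₗ Lex (Fin n → ℤ) := fun m => toLex (w m, toLex m) with hD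
  have hDinj : Function.Injective D := fun a b h => by
    have := congrArg (fun x => ofLex (ofLex x).2) h
    simpa [hD] using this
  have hmono : ∀ {a b : Fin n → ℤ}, D a ≤ D b → w a ≤ w b := by
    intro a b h
    rw [hD, Prod.Lex.le_iff] at h
    rcases h with h | ⟨h, -⟩
    · exact le_of_lt h
    · exact le_of_eq h
  -- pick the D-maximal exponents of f and g
  obtain ⟨mf, hmf, hmaxf⟩ := f.coeff.support.exists_max_image D (Finsupp.support_nonempty_iff.mpr (by simpa using hf))
  obtain ⟨mg, hmg, hmaxg⟩ := g.coeff.support.exists_max_image D (Finsupp.support_nonempty_iff.mpr (by simpa using hg))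
  -- leading coefficient of the product
  have hcoeff : (f * g).coeff (mf + mg) = f.coeff mf * g.coeff mg := by
    rw [AddMonoidAlgebra.coeff_mul]
    simp only [Finsupp.sum]
    rw [Finset.sum_eq_single mf]
    · rw [Finset.sum_eq_single mg]
      · simp
      · intro q hq hqne
        have : mf + q ≠ mf + mg := fun h => hqne (by simpa using add_left_cancel h)
        simp [this]
      · intro h
        simp [Finsupp.notMem_support_iff.mp h]
    · intro p hp hpne
      apply Finset.sum_eq_zero
      intro q hq
      have : p + q ≠ mf + mg := by
        intro h
        have h1 : D p < D mf := lt_of_le_of_ne (hmaxf p hp) (fun he => hpne (hDinj he))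
        have h2 : D q ≤ D mg := hmaxg q hq
        have h3 : D (p + q) < D (mf + mg) := by
          have hadd : ∀ a b, D (a + b) = D a + D b := fun a b => by
            simp only [hD, hwadd]; rfl
          rw [hadd, hadd]
          exact add_lt_add_of_lt_of_le h1 h2
        exact absurd (congrArg D h) h3.ne
      simp [this]
    · intro h
      exact absurd hmf h
  have hne : f.coeff mf * g.coeff mg ≠ 0 :=
    mul_ne_zero (Finsupp.mem_support_iff.mp hmf) (Finsupp.mem_support_iff.mp hmg)
  have hmem : mf + mg ∈ (f * g).coeff.support := by
    rw [Finsupp.mem_support_iff, hcoeff]; exact hne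
  -- wdegL f = w mf, wdegL g = w mg
  have hdegf : wdegL ν f = (w mf : WithBot ℤ) := by
    unfold wdegL
    apply le_antisymm
    · exact Finset.sup_le fun m hm => WithBot.coe_le_coe.mpr (hmono (hmaxf m hm))
    · exact Finset.le_sup (f := fun m => ((w m : ℤ) : WithBot ℤ)) hmf
  have hdegg : wdegL ν g = (w mg : WithBot ℤ) := by
    unfold wdegL
    apply le_antisymm
    · exact Finset.sup_le fun m hm => WithBot.coe_le_coe.mpr (hmono (hmaxg m hm))
    · exact Finset.le_sup (f := fun m => ((w m : ℤ) : WithBot ℤ)) hmg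
  have hdegfg : wdegL ν (f * g) = (w (mf + mg) : WithBot ℤ) := by
    unfold wdegL
    apply le_antisymm
    · apply Finset.sup_le
      intro m hm
      obtain ⟨p, hp, q, hq, rfl⟩ :=
        Finset.mem_add.mp (AddMonoidAlgebra.support_coeff_mul_subset f g hm)
      show ((w (p + q) : ℤ) : WithBot ℤ) ≤ ((w (mf + mg) : ℤ) : WithBot ℤ)
      simp only [hwadd]
      exact WithBot.coe_le_coe.mpr
        (add_le_add (hmono (hmaxf p hp)) (hmono (hmaxg q hq)))
    · exact Finset.le_sup (f := fun m => ((w m : ℤ) : WithBot ℤ)) hmem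
  rw [hdegf, hdegg, hdegfg, hwadd]
  exact_mod_cast rfl
end

section
/- Ostrowski's theorem: for nonzero polynomials f and g over a field (or integral domain), the Newton polytope of the product f·g equals the Minkowski sum of the Newton polytopes of f and g. -/
open Pointwise

/-- The Newton polytope of a multivariate polynomial over a commutative ring:
the convex hull in ℝⁿ of the exponent vectors of its nonzero terms. -/
noncomputable def newtonPolytope {n : ℕ} {R : Type*} [CommRing R]
    (f : MvPolynomial (Fin n) R) : Set (Fin n → ℝ) :=
  convexHull ℝ ((fun m i => ((m i : ℕ) : ℝ)) '' (f.support : Set (Fin n →₀ ℕ)))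

namespace NewtonAux

variable {n : ℕ}

/-- The embedding of exponent vectors into ℝⁿ. -/
noncomputable def Φ (m : Fin n →₀ ℕ) : Fin n → ℝ := fun i => ((m i : ℕ) : ℝ)

lemma Φ_add (u v : Fin n →₀ ℕ) : Φ (u + v) = Φ u + Φ v := by
  funext i
  simp [Φ, Finsupp.add_apply]

open MvPolynomial in
/-- The truncation of a polynomial to monomials satisfying `P`. -/
noncomputable def trunc {R : Type*} [CommRing R] (P : (Fin n →₀ ℕ) → Prop)
    [DecidablePred P] (f : MvPolynomial (Fin n) R) : MvPolynomial (Fin n) R :=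
  ∑ m ∈ f.support.filter P, monomial m (coeff m f)

open MvPolynomial in
lemma coeff_trunc {R : Type*} [CommRing R] (P : (Fin n →₀ ℕ) → Prop)
    [DecidablePred P] (f : MvPolynomial (Fin n) R) (u : Fin n →₀ ℕ) :
    coeff u (trunc P f) = if P u then coeff u f else 0 := by
  classical
  rw [trunc, coeff_sum]
  simp only [coeff_monomial]
  rw [Finset.sum_ite_eq' (f.support.filter P) u (fun m => coeff m f)]
  by_cases hP : P u
  · by_cases hu : u ∈ f.support
    · simp [hP, hu, Finset.mem_filter]
    · simp only [MvPolynomial.notMem_support_iff] at hu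
      simp [hP, hu]
  · simp [Finset.mem_filter, hP]

open MvPolynomial in
/-- Core combinatorial lemma: for any linear functional `L`, the product has a
monomial achieving the sum of the maxima of `L` on the supports of `f` and `g`. -/
lemma exists_max_mem {R : Type*} [CommRing R] [IsDomain R]
    (f g : MvPolynomial (Fin n) R) (hf : f ≠ 0) (hg : g ≠ 0)
    (L : (Fin n → ℝ) →L[ℝ] ℝ) :
    ∃ m ∈ (f * g).support,
      L (Φ m) = f.support.sup' (support_nonempty.2 hf) (fun m => L (Φ m)) +
        g.support.sup' (support_nonempty.2 hg) (fun m => L (Φ m)) := by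
  classical
  set M : ℝ := f.support.sup' (support_nonempty.2 hf) (fun m => L (Φ m)) with hM
  set N : ℝ := g.support.sup' (support_nonempty.2 hg) (fun m => L (Φ m)) with hN
  have hfM : ∀ u ∈ f.support, L (Φ u) ≤ M := fun u hu => Finset.le_sup' (fun m => L (Φ m)) hu
  have hgN : ∀ v ∈ g.support, L (Φ v) ≤ N := fun v hv => Finset.le_sup' (fun m => L (Φ m)) hv
  set f' := trunc (fun m => L (Φ m) = M) f with hf'
  set g' := trunc (fun m => L (Φ m) = N) g with hg'
  have hf'ne : f' ≠ 0 := by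
    obtain ⟨m0, hm0, hm0eq⟩ := Finset.exists_mem_eq_sup' (support_nonempty.2 hf)
      (fun m => L (Φ m))
    intro h
    have : coeff m0 f' = 0 := by rw [h]; simp
    rw [hf', coeff_trunc, if_pos hm0eq.symm] at this
    exact (mem_support_iff.1 hm0) this
  have hg'ne : g' ≠ 0 := by
    obtain ⟨m0, hm0, hm0eq⟩ := Finset.exists_mem_eq_sup' (support_nonempty.2 hg)
      (fun m => L (Φ m))
    intro h
    have : coeff m0 g' = 0 := by rw [h]; simp
    rw [hg', coeff_trunc, if_pos hm0eq.symm] at this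
    exact (mem_support_iff.1 hm0) this
  have hmul : f' * g' ≠ 0 := mul_ne_zero hf'ne hg'ne
  obtain ⟨m, hm⟩ := support_nonempty.2 hmul
  -- every monomial of f' * g' has L-value M + N
  have hmval : L (Φ m) = M + N := by
    have hc : coeff m (f' * g') ≠ 0 := mem_support_iff.1 hm
    rw [coeff_mul] at hc
    obtain ⟨⟨u, v⟩, huv, hne⟩ := Finset.exists_ne_zero_of_sum_ne_zero hc
    have hu : coeff u f' ≠ 0 := fun h => hne (by simp [h])
    have hv : coeff v g' ≠ 0 := fun h => hne (by simp [h])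
    rw [hf', coeff_trunc] at hu
    rw [hg', coeff_trunc] at hv
    have huM : L (Φ u) = M := by by_contra h; exact hu (if_neg h)
    have hvN : L (Φ v) = N := by by_contra h; exact hv (if_neg h)
    have : u + v = m := (Finset.HasAntidiagonal.mem_antidiagonal.1 huv)
    rw [← this, Φ_add, map_add, huM, hvN]
  -- the coefficient of m in f*g agrees with that in f'*g'
  have hcoeff : coeff m (f * g) = coeff m (f' * g') := by
    rw [coeff_mul, coeff_mul]
    refine Finset.sum_congr rfl ?_
    rintro ⟨u, v⟩ huv
    have hsum : u + v = m := Finset.HasAntidiagonal.mem_antidiagonal.1 huv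
    have hLsum : L (Φ u) + L (Φ v) = M + N := by
      rw [← map_add, ← Φ_add, hsum, hmval]
    simp only
    by_cases huM : L (Φ u) = M
    · have hvN : L (Φ v) = N := by linarith
      rw [hf', hg', coeff_trunc, coeff_trunc, if_pos huM, if_pos hvN]
    · rw [hf', coeff_trunc, if_neg huM, zero_mul]
      -- show coeff u f * coeff v g = 0
      by_cases hu : coeff u f = 0
      · rw [hu, zero_mul]
      · have huM' : L (Φ u) < M := lt_of_le_of_ne (hfM u (mem_support_iff.2 hu)) huM
        have hvN' : N < L (Φ v) := by linarith
        have : coeff v g = 0 := by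
          by_contra h
          exact absurd (hgN v (mem_support_iff.2 h)) (not_le.2 hvN')
        rw [this, mul_zero]
  refine ⟨m, mem_support_iff.2 ?_, hmval⟩
  rw [hcoeff]
  exact mem_support_iff.1 hm

end NewtonAux

open NewtonAux MvPolynomial in
/-- Ostrowski: for nonzero polynomials over an integral domain,
the Newton polytope of the product is the Minkowski sum of the Newton polytopes. -/
theorem newtonPolytope_mul {n : ℕ} {R : Type*} [CommRing R] [IsDomain R]
    (f g : MvPolynomial (Fin n) R) (hf : f ≠ 0) (hg : g ≠ 0) :
    newtonPolytope (f * g) = newtonPolytope f + newtonPolytope g := by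
  classical
  set A : Set (Fin n → ℝ) := Φ '' (f.support : Set (Fin n →₀ ℕ)) with hA
  set B : Set (Fin n → ℝ) := Φ '' (g.support : Set (Fin n →₀ ℕ)) with hB
  set S : Set (Fin n → ℝ) := Φ '' ((f * g).support : Set (Fin n →₀ ℕ)) with hS
  have hNP : ∀ (p : MvPolynomial (Fin n) R),
      newtonPolytope p = convexHull ℝ (Φ '' (p.support : Set (Fin n →₀ ℕ))) := by
    intro p; rfl
  have hRHS : newtonPolytope f + newtonPolytope g = convexHull ℝ (A + B) := by
    rw [hNP f, hNP g, convexHull_add]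
  rw [hNP (f * g), hRHS]
  apply Set.Subset.antisymm
  · -- easy direction: supp(fg) ⊆ supp f + supp g
    apply convexHull_mono
    rintro x ⟨m, hm, rfl⟩
    have : m ∈ f.support + g.support := MvPolynomial.support_mul f g hm
    obtain ⟨u, hu, v, hv, rfl⟩ := Finset.mem_add.1 this
    exact ⟨Φ u, ⟨u, hu, rfl⟩, Φ v, ⟨v, hv, rfl⟩, (Φ_add u v).symm⟩
  · -- hard direction
    have hSfin : S.Finite := ((f * g).support : Set (Fin n →₀ ℕ)).toFinite.image Φ
    have hclosed : IsClosed (convexHull ℝ S) := hSfin.isClosed_convexHull (𝕜 := ℝ)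
    refine convexHull_min ?_ (convex_convexHull ℝ S)
    rintro x ⟨a, ⟨u, hu, rfl⟩, b, ⟨v, hv, rfl⟩, rfl⟩
    by_contra hx
    obtain ⟨L, c, hLS, hLx⟩ :=
      geometric_hahn_banach_closed_point (convex_convexHull ℝ S) hclosed hx
    obtain ⟨m, hm, hmval⟩ := exists_max_mem f g hf hg L
    have hmem : Φ m ∈ convexHull ℝ S := subset_convexHull ℝ S ⟨m, hm, rfl⟩
    have h1 : L (Φ m) < c := hLS _ hmem
    have h2 : L (Φ u) ≤ f.support.sup' (support_nonempty.2 hf) (fun m => L (Φ m)) :=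
      Finset.le_sup' (fun m => L (Φ m)) hu
    have h3 : L (Φ v) ≤ g.support.sup' (support_nonempty.2 hg) (fun m => L (Φ m)) :=
      Finset.le_sup' (fun m => L (Φ m)) hv
    have h4 : L (Φ u + Φ v) ≤ L (Φ m) := by rw [map_add, hmval]; linarith
    linarith
end

section
/- Let D = Σᵢ Aᵢ ∂_{Xᵢ} be a polynomial derivation on ℂ[X₁,...,Xₙ] and let f be a nonconstant Darboux polynomial of D with cofactor g, i.e., D(f) = g·f. Then for every ν ∈ ℤⁿ, deg_ν(g) ≤ max_i (deg_ν(Aᵢ) − νᵢ), where the maximum is over indices i with Aᵢ·∂_{Xᵢ}f ≠ 0. -/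
open MvPolynomial

/-- The ν-weighted degree of a multivariate polynomial. -/
noncomputable def wdegP {n : ℕ} (ν : Fin n → ℤ) (f : MvPolynomial (Fin n) ℂ) : WithBot ℤ :=
  f.support.sup fun m => ((∑ i, ν i * (m i : ℤ) : ℤ) : WithBot ℤ)

namespace WdegAux

variable {n : ℕ} (ν : Fin n → ℤ)

/-- The weight of an exponent vector. -/
def W (m : Fin n →₀ ℕ) : ℤ := ∑ i, ν i * (m i : ℤ)

lemma wdegP_def (p : MvPolynomial (Fin n) ℂ) :
    wdegP ν p = p.support.sup fun m => ((W ν m : ℤ) : WithBot ℤ) := rfl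

lemma W_add (a b : Fin n →₀ ℕ) : W ν (a + b) = W ν a + W ν b := by
  simp only [W, Finsupp.add_apply, Nat.cast_add, mul_add, Finset.sum_add_distrib]

lemma le_wdegP {p : MvPolynomial (Fin n) ℂ} {m : Fin n →₀ ℕ} (h : m ∈ p.support) :
    ((W ν m : ℤ) : WithBot ℤ) ≤ wdegP ν p := by
  rw [wdegP_def]; exact Finset.le_sup (f := fun m => ((W ν m : ℤ) : WithBot ℤ)) h

lemma wdegP_zero : wdegP ν (0 : MvPolynomial (Fin n) ℂ) = ⊥ := by
  simp [wdegP]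

lemma exists_wdeg {p : MvPolynomial (Fin n) ℂ} (hp : p ≠ 0) :
    ∃ d : ℤ, wdegP ν p = (d : WithBot ℤ) ∧ ∃ m ∈ p.support, W ν m = d := by
  obtain ⟨m, hm, he⟩ := Finset.exists_mem_eq_sup p.support
    (Finset.nonempty_iff_ne_empty.mpr (mt MvPolynomial.support_eq_empty.mp hp)) (fun m => ((W ν m : ℤ) : WithBot ℤ))
  exact ⟨W ν m, he, m, hm, rfl⟩

/-- The leading form of a polynomial at weight `d`. -/
noncomputable def L (d : ℤ) (p : MvPolynomial (Fin n) ℂ) : MvPolynomial (Fin n) ℂ :=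
  ∑ m ∈ p.support.filter (fun m => W ν m = d), monomial m (coeff m p)

lemma coeff_L (d : ℤ) (p : MvPolynomial (Fin n) ℂ) (a : Fin n →₀ ℕ) :
    coeff a (L ν d p) = if W ν a = d then coeff a p else 0 := by
  classical
  rw [L, coeff_sum]
  simp only [coeff_monomial]
  rw [Finset.sum_ite_eq' _ a (fun m => coeff m p)]
  by_cases hW : W ν a = d
  · by_cases ha : a ∈ p.support
    · simp [Finset.mem_filter, ha, hW]
    · simp [Finset.mem_filter, ha, hW, notMem_support_iff.mp ha]
  · simp [Finset.mem_filter, hW]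

lemma le_wdeg_mul {p q : MvPolynomial (Fin n) ℂ} (hp : p ≠ 0) (hq : q ≠ 0) :
    wdegP ν p + wdegP ν q ≤ wdegP ν (p * q) := by
  classical
  obtain ⟨dp, hdp, mp, hmp, hWp⟩ := exists_wdeg ν hp
  obtain ⟨dq, hdq, mq, hmq, hWq⟩ := exists_wdeg ν hq
  set Lp := L ν dp p with hLpdef
  set Lq := L ν dq q with hLqdef
  have hwp : ∀ a : Fin n →₀ ℕ, coeff a p ≠ 0 → W ν a ≤ dp := by
    intro a ha
    have := le_wdegP ν (mem_support_iff.mpr ha)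
    rw [hdp] at this; exact_mod_cast this
  have hwq : ∀ a : Fin n →₀ ℕ, coeff a q ≠ 0 → W ν a ≤ dq := by
    intro a ha
    have := le_wdegP ν (mem_support_iff.mpr ha)
    rw [hdq] at this; exact_mod_cast this
  have hLp : Lp ≠ 0 := by
    intro h
    have : coeff mp Lp = coeff mp p := by rw [coeff_L, if_pos hWp]
    rw [h, coeff_zero] at this
    exact (mem_support_iff.mp hmp) this.symm
  have hLq : Lq ≠ 0 := by
    intro h
    have : coeff mq Lq = coeff mq q := by rw [coeff_L, if_pos hWq]
    rw [h, coeff_zero] at this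
    exact (mem_support_iff.mp hmq) this.symm
  obtain ⟨m, hm⟩ := MvPolynomial.ne_zero_iff.mp (mul_ne_zero hLp hLq)
  have hWm : W ν m = dp + dq := by
    obtain ⟨a, ha, b, hb, rfl⟩ := Finset.mem_add.mp
      (support_mul Lp Lq (mem_support_iff.mpr hm))
    have ha' : W ν a = dp := by
      by_contra h'
      exact mem_support_iff.mp ha (by rw [coeff_L, if_neg h'])
    have hb' : W ν b = dq := by
      by_contra h'
      exact mem_support_iff.mp hb (by rw [coeff_L, if_neg h'])
    rw [W_add, ha', hb']
  have hcoeff : coeff m (p * q) = coeff m (Lp * Lq) := by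
    rw [coeff_mul, coeff_mul]
    apply Finset.sum_congr rfl
    rintro ⟨a, b⟩ hab
    have hab' : a + b = m := Finset.HasAntidiagonal.mem_antidiagonal.mp hab
    have hWab : W ν a + W ν b = dp + dq := by rw [← W_add, hab', hWm]
    by_cases hWa : W ν a = dp
    · have hWb : W ν b = dq := by omega
      simp only [coeff_L, if_pos hWa, if_pos hWb, hLpdef, hLqdef]
    · have h0 : coeff a p * coeff b q = 0 := by
        rcases lt_or_gt_of_ne hWa with hlt | hgt
        · have : coeff b q = 0 := by
            by_contra h
            have := hwq b h; omega
          rw [this, mul_zero]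
        · have : coeff a p = 0 := by
            by_contra h
            have := hwp a h; omega
          rw [this, zero_mul]
      rw [h0]
      simp only [coeff_L, if_neg hWa, hLpdef, zero_mul]
  have hmem : m ∈ (p * q).support := mem_support_iff.mpr (by rw [hcoeff]; exact hm)
  have := le_wdegP ν hmem
  rw [hWm] at this
  rw [hdp, hdq, ← WithBot.coe_add]
  exact this

lemma wdeg_mul_le (p q : MvPolynomial (Fin n) ℂ) :
    wdegP ν (p * q) ≤ wdegP ν p + wdegP ν q := by
  classical
  rw [wdegP_def]
  apply Finset.sup_le
  intro m hm
  obtain ⟨a, ha, b, hb, rfl⟩ := Finset.mem_add.mp (support_mul p q hm)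
  rw [W_add, WithBot.coe_add]
  exact add_le_add (le_wdegP ν ha) (le_wdegP ν hb)

lemma wdeg_sum_le {ι : Type*} (s : Finset ι) (h : ι → MvPolynomial (Fin n) ℂ) :
    wdegP ν (∑ i ∈ s, h i) ≤ s.sup (fun i => wdegP ν (h i)) := by
  rw [wdegP_def]
  apply Finset.sup_le
  intro m hm
  rw [mem_support_iff, coeff_sum] at hm
  obtain ⟨i, hi, hne⟩ := Finset.exists_ne_zero_of_sum_ne_zero hm
  exact le_trans (le_wdegP ν (mem_support_iff.mpr hne))
    (Finset.le_sup (f := fun i => wdegP ν (h i)) hi)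

lemma wdeg_pderiv_le (i : Fin n) (f : MvPolynomial (Fin n) ℂ) :
    wdegP ν (pderiv i f) ≤ wdegP ν f + ((-ν i : ℤ) : WithBot ℤ) := by
  classical
  have hrw : pderiv i f =
      ∑ s ∈ f.support, monomial (s - Finsupp.single i 1) (coeff s f * (s i : ℂ)) := by
    conv_lhs => rw [← f.support_sum_monomial_coeff]
    rw [map_sum]
    apply Finset.sum_congr rfl
    intro s _
    rw [pderiv_monomial]
  rw [wdegP_def]
  apply Finset.sup_le
  intro m hm
  rw [mem_support_iff, hrw, coeff_sum] at hm
  obtain ⟨s, hs, hterm⟩ := Finset.exists_ne_zero_of_sum_ne_zero hm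
  rw [coeff_monomial] at hterm
  by_cases heq : (s - Finsupp.single i 1) = m
  swap
  · rw [if_neg heq] at hterm; exact absurd rfl hterm
  rw [if_pos heq] at hterm
  have hsi : s i ≠ 0 := by
    intro h
    rw [h] at hterm
    simp at hterm
  have hcast : ∀ j, (((s - Finsupp.single i 1 : Fin n →₀ ℕ) j : ℕ) : ℤ)
      = (s j : ℤ) - ((Finsupp.single i 1 : Fin n →₀ ℕ) j : ℤ) := by
    intro j
    rw [Finsupp.tsub_apply]
    have hle : (Finsupp.single i 1 : Fin n →₀ ℕ) j ≤ s j := by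
      by_cases hj : j = i
      · subst hj; rw [Finsupp.single_eq_same]; omega
      · rw [Finsupp.single_eq_of_ne' (fun h => hj h.symm)]; omega
    push_cast [hle]
    ring
  have hW : W ν m = W ν s - ν i := by
    rw [← heq]
    unfold W
    simp only [hcast, mul_sub, Finset.sum_sub_distrib]
    congr 1
    simp [Finsupp.single_apply]
  rw [hW]
  have h1 : ((W ν s : ℤ) : WithBot ℤ) ≤ wdegP ν f := le_wdegP ν hs
  calc ((W ν s - ν i : ℤ) : WithBot ℤ) = (W ν s : ℤ) + ((-ν i : ℤ) : WithBot ℤ) := by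
        rw [← WithBot.coe_add, sub_eq_add_neg]
    _ ≤ wdegP ν f + ((-ν i : ℤ) : WithBot ℤ) := add_le_add h1 le_rfl

end WdegAux

open WdegAux

/-- if f is a nonconstant Darboux polynomial of D = Σᵢ Aᵢ∂_{Xᵢ} with
cofactor g, then deg_ν(g) ≤ max over i with Aᵢ·∂_{Xᵢ}f ≠ 0 of (deg_ν(Aᵢ) − νᵢ). -/
theorem wdeg_cofactor_le {n : ℕ} (A : Fin n → MvPolynomial (Fin n) ℂ)
    (f g : MvPolynomial (Fin n) ℂ) (hf : f.totalDegree ≠ 0)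
    (hD : ∑ i, A i * pderiv i f = g * f) (ν : Fin n → ℤ) :
    wdegP ν g ≤ (Finset.univ.filter fun i => A i * pderiv i f ≠ 0).sup
      (fun i => (wdegP ν (A i)).map fun a => a - ν i) := by
  classical
  have hf0 : f ≠ 0 := fun h => hf (by simp [h])
  by_cases hg : g = 0
  · rw [hg, wdegP_zero]; exact bot_le
  obtain ⟨df, hdf, -⟩ := exists_wdeg ν hf0
  have hcancel : ∀ x y : WithBot ℤ, x + (df : WithBot ℤ) ≤ y + (df : WithBot ℤ) → x ≤ y :=
    fun x y h => (WithBot.add_le_add_iff_right WithBot.coe_ne_bot).mp h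
  apply hcancel
  calc wdegP ν g + (df : WithBot ℤ) = wdegP ν g + wdegP ν f := by rw [hdf]
    _ ≤ wdegP ν (g * f) := le_wdeg_mul ν hg hf0
    _ = wdegP ν (∑ i, A i * pderiv i f) := by rw [hD]
    _ ≤ Finset.univ.sup (fun i => wdegP ν (A i * pderiv i f)) := wdeg_sum_le ν _ _
    _ ≤ _ := by
        apply Finset.sup_le
        intro i _
        by_cases hi : A i * pderiv i f = 0
        · rw [hi, wdegP_zero]; exact bot_le
        have hAi : A i ≠ 0 := left_ne_zero_of_mul hi
        have hpf : pderiv i f ≠ 0 := right_ne_zero_of_mul hi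
        obtain ⟨da, hda, -⟩ := exists_wdeg ν hAi
        have h1 : wdegP ν (A i * pderiv i f) ≤ wdegP ν (A i) + wdegP ν (pderiv i f) :=
          wdeg_mul_le ν _ _
        have h2 : wdegP ν (pderiv i f) ≤ wdegP ν f + ((-ν i : ℤ) : WithBot ℤ) :=
          wdeg_pderiv_le ν i f
        have h3 : (wdegP ν (A i)).map (fun a => a - ν i) ≤
            (Finset.univ.filter fun j => A j * pderiv j f ≠ 0).sup
              (fun j => (wdegP ν (A j)).map fun a => a - ν j) :=
          Finset.le_sup (f := fun j => (wdegP ν (A j)).map fun a => a - ν j)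
            (Finset.mem_filter.mpr ⟨Finset.mem_univ i, hi⟩)
        calc wdegP ν (A i * pderiv i f)
            ≤ wdegP ν (A i) + (wdegP ν f + ((-ν i : ℤ) : WithBot ℤ)) :=
              le_trans h1 (add_le_add le_rfl h2)
          _ = (wdegP ν (A i)).map (fun a => a - ν i) + (df : WithBot ℤ) := by
              rw [hda, hdf, WithBot.map_coe, ← WithBot.coe_add, ← WithBot.coe_add,
                ← WithBot.coe_add]
              congr 1; ring
          _ ≤ _ := add_le_add h3 le_rfl
end

section
/- Let D = Σᵢ Aᵢ ∂_{Xᵢ} be a polynomial derivation. For generic (x₁,...,xₙ) ∈ ℂⁿ, let N_D be the Newton polytope of the Laurent polynomial Σᵢ xᵢ Aᵢ/Xᵢ. If f is a Darboux polynomial of D with cofactor g, then the Newton polytope of g is contained in N_D ∩ ℕⁿ. -/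
set_option maxHeartbeats 1000000

open MvPolynomial

/-- A multivariate polynomial viewed as a Laurent polynomial (element of the
add-monoid algebra over exponent vectors in ℤⁿ). -/
noncomputable def toLaurent' {n : ℕ} (f : MvPolynomial (Fin n) ℂ) :
    AddMonoidAlgebra ℂ (Fin n → ℤ) :=
  f.support.sum fun m => AddMonoidAlgebra.single (fun i => (m i : ℤ)) (f.coeff m)

/-- The Laurent polynomial f / Xᵢ. -/
noncomputable def overX {n : ℕ} (i : Fin n) (f : MvPolynomial (Fin n) ℂ) :
    AddMonoidAlgebra ℂ (Fin n → ℤ) :=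
  AddMonoidAlgebra.single (fun j => if j = i then (-1 : ℤ) else 0) (1 : ℂ) * toLaurent' f

/-- The Newton polytope of a multivariate Laurent polynomial. -/
noncomputable def NPL {n : ℕ} (f : AddMonoidAlgebra ℂ (Fin n → ℤ)) : Set (Fin n → ℝ) :=
  convexHull ℝ ((fun m i => ((m i : ℤ) : ℝ)) '' (f.coeff.support : Set (Fin n → ℤ)))

/-- The Newton polytope of a multivariate polynomial. -/
noncomputable def NP {n : ℕ} (f : MvPolynomial (Fin n) ℂ) : Set (Fin n → ℝ) :=
  convexHull ℝ ((fun m i => ((m i : ℕ) : ℝ)) '' (f.support : Set (Fin n →₀ ℕ)))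

/-! ### Auxiliary definitions and lemmas -/

/-- Exponent vectors as integer vectors. -/
def eZ {n : ℕ} (m : Fin n →₀ ℕ) : Fin n → ℤ := fun i => (m i : ℤ)

/-- Integer vectors as real vectors. -/
def rR {n : ℕ} (v : Fin n → ℤ) : Fin n → ℝ := fun i => ((v i : ℤ) : ℝ)

/-- The vector -eᵢ. -/
def negδ {n : ℕ} (i : Fin n) : Fin n → ℤ := fun j => if j = i then (-1 : ℤ) else 0

lemma eZ_injective {n : ℕ} : Function.Injective (eZ (n := n)) := by
  intro p q h
  ext i
  have h2 := congrFun h i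
  simp only [eZ] at h2
  exact_mod_cast h2

lemma eZ_add {n : ℕ} (p q : Fin n →₀ ℕ) : eZ (p + q) = eZ p + eZ q := by
  funext i; simp [eZ]

lemma rR_add {n : ℕ} (v w : Fin n → ℤ) : rR (v + w) = rR v + rR w := by
  funext i; simp [rR]

lemma toLaurent'_eq {n : ℕ} (f : MvPolynomial (Fin n) ℂ) :
    toLaurent' f = AddMonoidAlgebra.ofCoeff (Finsupp.mapDomain eZ (AddMonoidAlgebra.coeff f)) := by
  apply AddMonoidAlgebra.coeff_injective
  rw [toLaurent', AddMonoidAlgebra.coeff_sum, Finsupp.mapDomain, Finsupp.sum]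
  rfl

lemma toLaurent'_apply {n : ℕ} (f : MvPolynomial (Fin n) ℂ) (m : Fin n →₀ ℕ) :
    (toLaurent' f).coeff (eZ m) = MvPolynomial.coeff m f := by
  rw [toLaurent'_eq]
  show (Finsupp.mapDomain eZ (AddMonoidAlgebra.coeff f)) (eZ m) = _
  rw [Finsupp.mapDomain_apply eZ_injective]
  rfl

lemma overX_apply {n : ℕ} (i : Fin n) (f : MvPolynomial (Fin n) ℂ) (m : Fin n →₀ ℕ) :
    (overX i f).coeff (negδ i + eZ m) = MvPolynomial.coeff m f := by
  have h := AddMonoidAlgebra.coeff_single_mul_eq_mul_coeff (x := toLaurent' f) (r := (1 : ℂ))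
    (m := negδ i) (m₁ := negδ i + eZ m) (eZ m) (fun a _ => add_right_inj _)
  rw [one_mul, toLaurent'_apply] at h
  exact h

lemma coeff_linform {K : Type*} [CommSemiring K] {n : ℕ} (c : Fin n → K) (i : Fin n) :
    MvPolynomial.coeff (Finsupp.single i 1)
      (∑ j, (C (c j) * X j : MvPolynomial (Fin n) K)) = c i := by
  classical
  rw [MvPolynomial.coeff_sum]
  rw [Finset.sum_eq_single i]
  · rw [coeff_C_mul, coeff_X', if_pos rfl, mul_one]
  · intro j _ hj
    rw [coeff_C_mul, coeff_X', if_neg, mul_zero]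
    intro h
    exact hj (Finsupp.single_left_injective one_ne_zero h)
  · intro h; exact absurd (Finset.mem_univ i) h

lemma linform_ne_zero {K : Type*} [CommSemiring K] {n : ℕ} {c : Fin n → K} {i : Fin n}
    (h : c i ≠ 0) : (∑ j, (C (c j) * X j) : MvPolynomial (Fin n) K) ≠ 0 := by
  intro h0
  apply h
  rw [← coeff_linform c i, h0, coeff_zero]

lemma eval_linform {K : Type*} [CommSemiring K] {n : ℕ} (c x : Fin n → K) :
    eval x (∑ j, (C (c j) * X j) : MvPolynomial (Fin n) K) = ∑ j, c j * x j := by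
  simp

lemma exists_sep {n : ℕ} (S : Finset (Fin n →₀ ℕ)) :
    ∃ c : Fin n → ℝ, ∀ p ∈ S, ∀ q ∈ S, p ≠ q →
      (∑ i, ((p i : ℝ) - (q i : ℝ)) * c i) ≠ 0 := by
  classical
  set pairs := (S ×ˢ S).filter (fun pq => pq.1 ≠ pq.2) with hpairs
  set Q : MvPolynomial (Fin n) ℝ :=
    ∏ pq ∈ pairs, ∑ i, C ((pq.1 i : ℝ) - (pq.2 i : ℝ)) * X i with hQdef
  have hQ : Q ≠ 0 := by
    rw [hQdef]
    rw [Finset.prod_ne_zero_iff]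
    intro pq hpq
    have hne : pq.1 ≠ pq.2 := (Finset.mem_filter.1 hpq).2
    obtain ⟨i, hi⟩ : ∃ i, pq.1 i ≠ pq.2 i := by
      by_contra h; push_neg at h; exact hne (Finsupp.ext h)
    exact linform_ne_zero (i := i) (sub_ne_zero.2 (by exact_mod_cast hi))
  obtain ⟨c, hc⟩ : ∃ c, eval c Q ≠ 0 := by
    by_contra h; push_neg at h
    exact hQ (MvPolynomial.funext fun x => by rw [h x, map_zero])
  refine ⟨c, ?_⟩
  intro p hp q hq hne
  have hmem : ((p, q) : (Fin n →₀ ℕ) × (Fin n →₀ ℕ)) ∈ pairs :=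
    Finset.mem_filter.2 ⟨Finset.mem_product.2 ⟨hp, hq⟩, hne⟩
  have hfac : eval c (∑ i, C ((p i : ℝ) - (q i : ℝ)) * X i) ≠ 0 := by
    rw [hQdef, map_prod] at hc
    exact Finset.prod_ne_zero_iff.1 hc (p, q) hmem
  rwa [eval_linform] at hfac

lemma pderiv_support {n : ℕ} {f : MvPolynomial (Fin n) ℂ} {i : Fin n} {m : Fin n →₀ ℕ}
    (hm : m ∈ ((pderiv i) f).support) : m + Finsupp.single i 1 ∈ f.support := by
  classical
  have hrw : (pderiv i) f =
      ∑ v ∈ f.support, monomial (v - Finsupp.single i 1) (coeff v f * (v i : ℂ)) := by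
    conv_lhs => rw [f.as_sum]
    rw [map_sum]
    exact Finset.sum_congr rfl fun v _ => pderiv_monomial
  rw [hrw] at hm
  obtain ⟨v, hv, hmv⟩ := Finset.mem_biUnion.1 (MvPolynomial.support_sum hm)
  rw [MvPolynomial.support_monomial] at hmv
  by_cases hz : coeff v f * (v i : ℂ) = 0
  · rw [if_pos hz] at hmv; exact absurd hmv (Finset.notMem_empty m)
  · rw [if_neg hz] at hmv
    rw [Finset.mem_singleton] at hmv
    subst hmv
    have hvi : v i ≠ 0 := by
      intro h
      apply hz
      rw [h]
      simp
    have hle : Finsupp.single i 1 ≤ v := Finsupp.single_le_iff.2 (Nat.one_le_iff_ne_zero.2 hvi)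
    rwa [tsub_add_cancel_of_le hle]

set_option maxHeartbeats 1000000 in
lemma key_lemma {n : ℕ} {f g : MvPolynomial (Fin n) ℂ} (hf : f ≠ 0) (T : Finset (Fin n → ℤ))
    (H : ∀ p ∈ (g * f).support, ∃ μ ∈ T, ∃ m ∈ f.support, eZ p = μ + eZ m) :
    ∀ a ∈ g.support, rR (eZ a) ∈ convexHull ℝ (rR '' (T : Set (Fin n → ℤ))) := by
  classical
  intro a ha
  by_contra hcon
  obtain ⟨ℓ, ub, hub, huba⟩ := _root_.geometric_hahn_banach_closed_point
    (convex_convexHull ℝ _) ((T.finite_toSet.image rR).isClosed_convexHull (𝕜 := ℝ)) hcon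
  obtain ⟨c, hc⟩ := exists_sep (g.support ∪ f.support)
  set φ : (Fin n →₀ ℕ) → ℝ := fun m => ℓ (rR (eZ m)) with hφ
  set ψ : (Fin n →₀ ℕ) → ℝ := fun m => ∑ i, (m i : ℝ) * c i with hψ
  have hφadd : ∀ p q : Fin n →₀ ℕ, φ (p + q) = φ p + φ q := by
    intro p q
    simp only [hφ, eZ_add, rR_add, map_add]
  have hψadd : ∀ p q : Fin n →₀ ℕ, ψ (p + q) = ψ p + ψ q := by
    intro p q
    simp only [hψ, ← Finset.sum_add_distrib]
    refine Finset.sum_congr rfl fun i _ => ?_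
    rw [Finsupp.add_apply]
    push_cast
    ring
  have hψinj : ∀ p ∈ g.support ∪ f.support, ∀ q ∈ g.support ∪ f.support, ψ p = ψ q → p = q := by
    intro p hp q hq hpq
    by_contra hne
    apply hc p hp q hq hne
    have : (∑ i, ((p i : ℝ) - (q i : ℝ)) * c i) = ψ p - ψ q := by
      rw [hψ, ← Finset.sum_sub_distrib]
      exact Finset.sum_congr rfl fun i _ => by ring
    rw [this, hpq, sub_self]
  -- choose the lex-maximal exponent u of g
  have hgne : g.support.Nonempty := ⟨a, ha⟩
  obtain ⟨u0, hu0, hu0max⟩ := Finset.exists_max_image g.support φ hgne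
  set G1 := g.support.filter (fun m => ∀ m' ∈ g.support, φ m' ≤ φ m) with hG1
  have hG1ne : G1.Nonempty := ⟨u0, Finset.mem_filter.2 ⟨hu0, hu0max⟩⟩
  obtain ⟨u, huG1, humax⟩ := Finset.exists_max_image G1 ψ hG1ne
  have hu : u ∈ g.support := (Finset.mem_filter.1 huG1).1
  have huφ : ∀ m ∈ g.support, φ m ≤ φ u := (Finset.mem_filter.1 huG1).2
  have huψ : ∀ m ∈ g.support, φ m = φ u → ψ m ≤ ψ u := by
    intro m hm hφm
    exact humax m (Finset.mem_filter.2 ⟨hm, fun m' hm' => (huφ m' hm').trans hφm.ge⟩)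
  -- choose the lex-maximal exponent w of f
  have hfne : f.support.Nonempty := by
    rw [Finset.nonempty_iff_ne_empty, Ne, MvPolynomial.support_eq_empty]
    exact hf
  obtain ⟨w0, hw0, hw0max⟩ := Finset.exists_max_image f.support φ hfne
  set F1 := f.support.filter (fun m => ∀ m' ∈ f.support, φ m' ≤ φ m) with hF1
  have hF1ne : F1.Nonempty := ⟨w0, Finset.mem_filter.2 ⟨hw0, hw0max⟩⟩
  obtain ⟨w, hwF1, hwmax⟩ := Finset.exists_max_image F1 ψ hF1ne
  have hw : w ∈ f.support := (Finset.mem_filter.1 hwF1).1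
  have hwφ : ∀ m ∈ f.support, φ m ≤ φ w := (Finset.mem_filter.1 hwF1).2
  have hwψ : ∀ m ∈ f.support, φ m = φ w → ψ m ≤ ψ w := by
    intro m hm hφm
    exact hwmax m (Finset.mem_filter.2 ⟨hm, fun m' hm' => (hwφ m' hm').trans hφm.ge⟩)
  -- the coefficient of g*f at u+w is (coeff u g) * (coeff w f)
  have hcoeff : coeff (u + w) (g * f) = coeff u g * coeff w f := by
    rw [coeff_mul]
    apply Finset.sum_eq_single_of_mem (u, w)
    · exact Finset.HasAntidiagonal.mem_antidiagonal.2 rfl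
    · rintro ⟨m, m'⟩ hmem hne
      have hsum : m + m' = u + w := Finset.HasAntidiagonal.mem_antidiagonal.1 hmem
      by_contra h0
      have hmg : coeff m g ≠ 0 := left_ne_zero_of_mul h0
      have hmf : coeff m' f ≠ 0 := right_ne_zero_of_mul h0
      have hmgs : m ∈ g.support := MvPolynomial.mem_support_iff.2 hmg
      have hmfs : m' ∈ f.support := MvPolynomial.mem_support_iff.2 hmf
      have h1 : φ m + φ m' = φ u + φ w := by
        rw [← hφadd, ← hφadd, hsum]
      have h2 : φ m ≤ φ u := huφ m hmgs
      have h3 : φ m' ≤ φ w := hwφ m' hmfs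
      have h4 : φ m = φ u := by linarith
      have h5 : φ m' = φ w := by linarith
      have h6 : ψ m ≤ ψ u := huψ m hmgs h4
      have h7 : ψ m' ≤ ψ w := hwψ m' hmfs h5
      have h8 : ψ m + ψ m' = ψ u + ψ w := by
        rw [← hψadd, ← hψadd, hsum]
      have h9 : ψ m = ψ u := by linarith
      have hmu : m = u :=
        hψinj m (Finset.mem_union_left _ hmgs) u (Finset.mem_union_left _ hu) h9
      have hmw : m' = w := by
        subst hmu
        exact add_left_cancel hsum
      exact hne (by rw [hmu, hmw])
  have hsup : u + w ∈ (g * f).support := by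
    rw [MvPolynomial.mem_support_iff, hcoeff]
    exact mul_ne_zero (MvPolynomial.mem_support_iff.1 hu) (MvPolynomial.mem_support_iff.1 hw)
  obtain ⟨μ, hμT, m0, hm0, heq2⟩ := H (u + w) hsup
  have hμ : ℓ (rR μ) < ub :=
    hub _ (subset_convexHull ℝ _ ⟨μ, Finset.mem_coe.2 hμT, rfl⟩)
  have h1 : φ u + φ w = ℓ (rR μ) + φ m0 := by
    have h := congrArg (fun v => ℓ (rR v)) heq2
    rw [eZ_add, rR_add, map_add, rR_add, map_add] at h
    exact h
  have h2 : φ m0 ≤ φ w := hwφ m0 hm0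
  have h3 : ub < φ a := huba
  have h4 : φ a ≤ φ u := huφ a ha
  linarith

lemma orthant_convex (n : ℕ) : Convex ℝ {m : Fin n → ℝ | ∀ i, 0 ≤ m i} := by
  intro p hp q hq s t hs ht hst i
  simp only [Pi.add_apply, Pi.smul_apply, smul_eq_mul]
  exact add_nonneg (mul_nonneg hs (hp i)) (mul_nonneg ht (hq i))

/-- for generic (x₁,…,xₙ) (outside the zero set of some nonzero
polynomial P), the Newton polytope of the cofactor g of any Darboux polynomial f of
D = Σᵢ Aᵢ∂_{Xᵢ} is contained in N_D ∩ ℕⁿ, where N_D = N(Σᵢ xᵢ Aᵢ/Xᵢ). -/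
theorem cofactor_newtonPolytope_subset {n : ℕ} (A : Fin n → MvPolynomial (Fin n) ℂ) :
    ∃ P : MvPolynomial (Fin n) ℂ, P ≠ 0 ∧
      ∀ x : Fin n → ℂ, eval x P ≠ 0 →
        ∀ f g : MvPolynomial (Fin n) ℂ, f ≠ 0 → (∑ i, A i * pderiv i f) = g * f →
          NP g ⊆ NPL (∑ i, x i • overX i (A i)) ∩ {m : Fin n → ℝ | ∀ i, 0 ≤ m i} := by
  classical
  set T : Finset (Fin n → ℤ) := Finset.univ.biUnion (fun i => (overX i (A i)).coeff.support)
    with hTdef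
  refine ⟨∏ μ ∈ T, ∑ i, C ((overX i (A i)).coeff μ) * X i, ?_, ?_⟩
  · rw [Finset.prod_ne_zero_iff]
    intro μ hμ
    obtain ⟨i, -, hi⟩ := Finset.mem_biUnion.1 hμ
    exact linform_ne_zero (Finsupp.mem_support_iff.1 hi)
  · intro x hx f g hf heq
    have hx' : ∀ μ ∈ T, eval x (∑ i, C ((overX i (A i)).coeff μ) * X i) ≠ 0 := by
      rw [map_prod] at hx
      exact fun μ hμ => Finset.prod_ne_zero_iff.1 hx μ hμ
    have hTsub : (T : Set (Fin n → ℤ)) ⊆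
        ((∑ i, x i • overX i (A i)).coeff.support : Set (Fin n → ℤ)) := by
      intro μ hμ
      have hμT : μ ∈ T := Finset.mem_coe.1 hμ
      have h1 : (∑ i, x i • overX i (A i)).coeff μ = ∑ i, (overX i (A i)).coeff μ * x i := by
        rw [AddMonoidAlgebra.coeff_sum, Finset.sum_apply']
        exact Finset.sum_congr rfl fun i _ => by
          rw [AddMonoidAlgebra.coeff_smul_apply, smul_eq_mul, mul_comm]
      have h2 := hx' μ hμT
      rw [eval_linform] at h2
      refine Finset.mem_coe.2 (Finsupp.mem_support_iff.2 ?_)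
      rw [h1]
      exact h2
    have H : ∀ p ∈ (g * f).support, ∃ μ ∈ T, ∃ m ∈ f.support, eZ p = μ + eZ m := by
      intro p hp
      rw [← heq] at hp
      obtain ⟨i, -, hpi⟩ := Finset.mem_biUnion.1 (MvPolynomial.support_sum hp)
      obtain ⟨m, hm, m', hm', hsum⟩ := Finset.mem_add.1 (MvPolynomial.support_mul _ _ hpi)
      refine ⟨negδ i + eZ m, Finset.mem_biUnion.2 ⟨i, Finset.mem_univ i, ?_⟩,
        m' + Finsupp.single i 1, pderiv_support hm', ?_⟩
      · refine Finsupp.mem_support_iff.2 ?_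
        rw [overX_apply]
        exact MvPolynomial.mem_support_iff.1 hm
      · rw [← hsum, eZ_add, eZ_add]
        funext j
        simp only [eZ, Pi.add_apply, negδ, Finsupp.single_apply]
        by_cases hj : j = i
        · subst hj
          simp
          ring
        · simp [hj, Ne.symm hj]
    unfold NP
    apply convexHull_min ?_ (Convex.inter (convex_convexHull ℝ _) (orthant_convex n))
    rintro _ ⟨m, hm, rfl⟩
    constructor
    · have hkey := key_lemma hf T H m hm
      have hrw : (fun i => ((m i : ℕ) : ℝ)) = rR (eZ m) := by
        funext i
        simp [rR, eZ]
      beta_reduce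
      rw [hrw]
      exact convexHull_mono (Set.image_mono hTsub) hkey
    · intro i
      exact Nat.cast_nonneg _
end

section
/- Let p ∈ ℂ[X₁] be a polynomial of degree d, let α be a root of p, and let ξ₂,...,ξₙ be complex numbers such that p'(α), ξ₂,...,ξₙ are linearly independent over ℤ. Then the derivation D = p(X₁)∂_{X₁} + ξ₂X₂∂_{X₂} + ··· + ξₙXₙ∂_{Xₙ} has no nonconstant rational first integral. -/
open MvPolynomial

set_option maxHeartbeats 1000000
set_option synthInstance.maxHeartbeats 400000
set_option linter.unusedSectionVars false

/-- The field of rational functions ℂ(X₁,…,Xₙ). -/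
abbrev RatFunField (n : ℕ) := FractionRing (MvPolynomial (Fin n) ℂ)


noncomputable section

variable {n : ℕ} [NeZero n]

def mdeg (m : Fin n →₀ ℕ) : ℕ := ∑ i, m i

lemma mdeg_add (u v : Fin n →₀ ℕ) : mdeg (u + v) = mdeg u + mdeg v := by
  simp [mdeg, Finset.sum_add_distrib]

lemma mdeg_single (i : Fin n) (k : ℕ) : mdeg (Finsupp.single i k) = k := by
  simp [mdeg, Finsupp.single_apply]

lemma one_le_mdeg {u : Fin n →₀ ℕ} (h : u ≠ 0) : 1 ≤ mdeg u := by
  obtain ⟨i, hi⟩ : ∃ i, u i ≠ 0 := by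
    by_contra hc
    push_neg at hc
    exact h (Finsupp.ext hc)
  calc 1 ≤ u i := by omega
  _ ≤ mdeg u := Finset.single_le_sum (fun j _ => Nat.zero_le _) (Finset.mem_univ i)

def mlam (ξ : Fin n → ℂ) (m : Fin n →₀ ℕ) : ℂ := ∑ i, (m i : ℂ) * ξ i

lemma mlam_inj {ξ : Fin n → ℂ} (hindep : LinearIndependent ℤ ξ) {u v : Fin n →₀ ℕ}
    (h : mlam ξ u = mlam ξ v) : u = v := by
  have key := Fintype.linearIndependent_iff.mp hindep (fun i => (u i : ℤ) - (v i : ℤ))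
  have hsum : ∑ i, ((u i : ℤ) - (v i : ℤ)) • ξ i = 0 := by
    have : ∑ i, ((u i : ℤ) - (v i : ℤ)) • ξ i = mlam ξ u - mlam ξ v := by
      simp [mlam, zsmul_eq_mul, sub_mul, Finset.sum_sub_distrib]
    rw [this, h, sub_self]
  ext i
  have := key hsum i
  omega

def OrdGE (t : ℕ) (f : MvPolynomial (Fin n) ℂ) : Prop := ∀ m ∈ f.support, t ≤ mdeg m

lemma OrdGE.coeff_eq_zero {t : ℕ} {f : MvPolynomial (Fin n) ℂ} (h : OrdGE t f)
    {m : Fin n →₀ ℕ} (hm : mdeg m < t) : coeff m f = 0 := by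
  by_contra hc
  exact absurd (h m (mem_support_iff.mpr hc)) (by omega)

lemma OrdGE.mono {t s : ℕ} {f : MvPolynomial (Fin n) ℂ} (h : OrdGE t f) (hs : s ≤ t) :
    OrdGE s f := fun m hm => le_trans hs (h m hm)

lemma OrdGE.zero {t : ℕ} : OrdGE t (0 : MvPolynomial (Fin n) ℂ) := by
  intro m hm; simp at hm

lemma OrdGE.monomial {t : ℕ} (m : Fin n →₀ ℕ) (r : ℂ) (h : t ≤ mdeg m) :
    OrdGE t (monomial m r) := by
  intro u hu
  rcases (Finset.mem_singleton.mp (support_monomial_subset hu)) with rfl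
  exact h

lemma OrdGE.mul {t s : ℕ} {f g : MvPolynomial (Fin n) ℂ} (hf : OrdGE t f) (hg : OrdGE s g) :
    OrdGE (t + s) (f * g) := by
  intro m hm
  classical
  obtain ⟨u, hu, v, hv, rfl⟩ := Finset.mem_add.mp (support_mul f g hm)
  rw [mdeg_add]
  exact Nat.add_le_add (hf u hu) (hg v hv)

lemma OrdGE.add {t : ℕ} {f g : MvPolynomial (Fin n) ℂ} (hf : OrdGE t f) (hg : OrdGE t g) :
    OrdGE t (f + g) := by
  intro m hm
  rcases Finset.mem_union.mp (Finsupp.support_add hm) with h | h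
  · exact hf m h
  · exact hg m h

lemma OrdGE.smul {t : ℕ} {f : MvPolynomial (Fin n) ℂ} (hf : OrdGE t f) (r : ℂ) :
    OrdGE t (r • f) := by
  intro m hm
  apply hf
  rw [mem_support_iff] at hm ⊢
  intro h0
  rw [smul_eq_C_mul, coeff_C_mul, h0, mul_zero] at hm
  exact hm rfl

lemma OrdGE.sum {t : ℕ} {ι : Type*} (s : Finset ι) (f : ι → MvPolynomial (Fin n) ℂ)
    (hf : ∀ i ∈ s, OrdGE t (f i)) : OrdGE t (∑ i ∈ s, f i) := by
  classical
  induction s using Finset.induction_on with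
  | empty => intro m hm; simp at hm
  | insert _ _ hni ih =>
    rw [Finset.sum_insert hni]
    exact (hf _ (Finset.mem_insert_self _ _)).add
      (ih fun i hi => hf i (Finset.mem_insert_of_mem hi))

lemma sub_single_add_single (s : Fin n →₀ ℕ) (i : Fin n) (hi : s i ≠ 0) :
    s - Finsupp.single i 1 + Finsupp.single i 1 = s := by
  ext j
  by_cases hj : j = i
  · subst hj; simp [Finsupp.tsub_apply, Finsupp.single_apply]; omega
  · simp [Finsupp.tsub_apply, Finsupp.single_apply, Ne.symm hj]

lemma delta0_monomial (ξ : Fin n → ℂ) (s : Fin n →₀ ℕ) (r : ℂ) :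
    mkDerivation ℂ (fun i => C (ξ i) * X i) (monomial s r) = monomial s (r * mlam ξ s) := by
  rw [mkDerivation_monomial]
  have hterm : ∀ i ∈ s.support,
      monomial (s - Finsupp.single i 1) ((s i : ℂ)) • ((C (ξ i) * X i) : MvPolynomial (Fin n) ℂ)
        = monomial s ((s i : ℂ) * ξ i) := by
    intro i hi
    rw [smul_eq_mul]
    rw [C_mul_X_eq_monomial (a := ξ i) (s := i), monomial_mul,
      sub_single_add_single s i (Finsupp.mem_support_iff.mp hi)]
  rw [Finsupp.sum, Finset.sum_congr rfl hterm]
  have h2 : ∑ x ∈ s.support, (monomial s) ((s x : ℂ) * ξ x)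
      = monomial s (∑ x ∈ s.support, (s x : ℂ) * ξ x) := by
    rw [← map_sum (monomial s)]
  rw [h2]
  have hext : ∑ x ∈ s.support, (s x : ℂ) * ξ x = mlam ξ s := by
    unfold mlam
    apply Finset.sum_subset (Finset.subset_univ _)
    intro x _ hx
    simp [Finsupp.notMem_support_iff.mp hx]
  rw [hext, smul_monomial, smul_eq_mul]

lemma coeff_delta0 (ξ : Fin n → ℂ) (f : MvPolynomial (Fin n) ℂ) (u : Fin n →₀ ℕ) :
    coeff u (mkDerivation ℂ (fun i => C (ξ i) * X i) f) = mlam ξ u * coeff u f := by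
  induction f using MvPolynomial.induction_on' with
  | monomial s r =>
    rw [delta0_monomial, coeff_monomial, coeff_monomial]
    by_cases h : s = u
    · subst h; simp [mul_comm]
    · simp [h]
  | add p q hp hq => simp [map_add, hp, hq, mul_add]

lemma ordGE_aeval {q' : Polynomial ℂ} (h0 : q'.coeff 0 = 0) (h1 : q'.coeff 1 = 0) :
    OrdGE 2 (Polynomial.aeval (X 0 : MvPolynomial (Fin n) ℂ) q') := by
  rw [Polynomial.aeval_def, Polynomial.eval₂_eq_sum, Polynomial.sum_def]
  apply OrdGE.sum
  intro k hk
  have hk2 : 2 ≤ k := by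
    rcases Nat.lt_or_ge k 2 with h | h
    · interval_cases k <;> simp_all [Polynomial.mem_support_iff]
    · exact h
  have heq : (algebraMap ℂ (MvPolynomial (Fin n) ℂ)) (q'.coeff k) * X 0 ^ k
      = monomial (Finsupp.single 0 k) (q'.coeff k) := by
    rw [X_pow_eq_monomial, algebraMap_eq, C_mul_monomial, mul_one]
  rw [heq]
  exact OrdGE.monomial _ _ (by rw [mdeg_single]; exact hk2)

lemma delta1_ord {q : MvPolynomial (Fin n) ℂ} (hq : OrdGE 2 q) {t : ℕ}
    {f : MvPolynomial (Fin n) ℂ} (hf : OrdGE t f) :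
    OrdGE (t + 1) (mkDerivation ℂ (fun i => if i = 0 then q else 0) f) := by
  rw [f.as_sum, map_sum]
  apply OrdGE.sum
  intro m hm
  rw [mkDerivation_monomial]
  apply OrdGE.smul
  rw [Finsupp.sum]
  apply OrdGE.sum
  intro i hi
  by_cases h0 : i = 0
  · subst h0
    rw [if_pos rfl, smul_eq_mul]
    have hm0 : m 0 ≠ 0 := Finsupp.mem_support_iff.mp hi
    have hdeg : mdeg (m - Finsupp.single 0 1) + 1 = mdeg m := by
      have := mdeg_add (m - Finsupp.single 0 1) (Finsupp.single 0 1)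
      rw [sub_single_add_single m 0 hm0, mdeg_single] at this
      omega
    have h1 : OrdGE (mdeg (m - Finsupp.single 0 1))
        (monomial (m - Finsupp.single 0 1) ((m 0 : ℕ) : ℂ)) :=
      OrdGE.monomial _ _ le_rfl
    apply (h1.mul hq).mono
    have := hf m hm
    omega
  · rw [if_neg h0, smul_zero]
    exact OrdGE.zero

/-- Core rigidity lemma: if `(Δ₀ + Δ₁) c = Λ c` with `c ≠ 0`, then some monomial `m`
of `c` has eigenvalue `mlam ξ m = Λ(0)`; in fact the minimal-degree one does. -/
lemma core {ξ : Fin n → ℂ} {q c Λ : MvPolynomial (Fin n) ℂ} (hq : OrdGE 2 q)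
    (hc : c ≠ 0)
    (h : mkDerivation ℂ (fun i => C (ξ i) * X i) c
        + mkDerivation ℂ (fun i => if i = 0 then q else 0) c = Λ * c) :
    ∃ m, coeff m c ≠ 0 ∧ mlam ξ m = constantCoeff Λ := by
  obtain ⟨m, hm, hmin⟩ := Finset.exists_min_image c.support mdeg (support_nonempty.mpr hc)
  have hcm : coeff m c ≠ 0 := mem_support_iff.mp hm
  refine ⟨m, hcm, ?_⟩
  set t := mdeg m with ht
  have hOc : OrdGE t c := fun u hu => hmin u hu
  set μ := constantCoeff Λ with hμ
  have h1 : coeff m (mkDerivation ℂ (fun i => if i = 0 then q else 0) c) = 0 :=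
    OrdGE.coeff_eq_zero (delta1_ord hq hOc) (by omega)
  have hO1 : OrdGE 1 (Λ - C μ) := by
    intro u hu
    apply one_le_mdeg
    rintro rfl
    rw [mem_support_iff] at hu
    apply hu
    rw [coeff_sub]
    have : coeff 0 Λ = μ := rfl
    simp [this, coeff_C]
  have h2 : coeff m ((Λ - C μ) * c) = 0 :=
    OrdGE.coeff_eq_zero (hO1.mul hOc) (by omega)
  have h3 : coeff m (Λ * c) = μ * coeff m c := by
    have : Λ * c = C μ * c + (Λ - C μ) * c := by ring
    rw [this, coeff_add, h2, add_zero, coeff_C_mul]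
  have h4 := congrArg (coeff m) h
  rw [coeff_add, coeff_delta0, h1, add_zero, h3] at h4
  exact mul_right_cancel₀ hcm h4

end

/-- for p with root α such that p'(α), ξ₂,…,ξₙ are ℤ-linearly
independent, the derivation D = p(X₁)∂_{X₁} + Σ_{i≥2} ξᵢXᵢ∂_{Xᵢ} has no nonconstant
rational first integral. -/
theorem no_rational_first_integral {n : ℕ} [NeZero n]
    (p : Polynomial ℂ) (d : ℕ) (hd : p.natDegree = d)
    (α : ℂ) (hα : p.eval α = 0)
    (ξ : Fin n → ℂ) (hξ0 : ξ 0 = p.derivative.eval α)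
    (hindep : LinearIndependent ℤ ξ)
    (D : Derivation ℂ (RatFunField n) (RatFunField n))
    (hD0 : D (algebraMap (MvPolynomial (Fin n) ℂ) (RatFunField n) (X 0))
      = algebraMap (MvPolynomial (Fin n) ℂ) (RatFunField n) (Polynomial.aeval (X 0) p))
    (hDi : ∀ i : Fin n, i ≠ 0 →
      D (algebraMap (MvPolynomial (Fin n) ℂ) (RatFunField n) (X i))
        = ξ i • algebraMap (MvPolynomial (Fin n) ℂ) (RatFunField n) (X i)) :
    ∀ F : RatFunField n, D F = 0 → ∃ c : ℂ, F = algebraMap ℂ (RatFunField n) c := by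
  classical
  intro F hF
  set φ : MvPolynomial (Fin n) ℂ →ₐ[ℂ] RatFunField n := IsScalarTower.toAlgHom ℂ (MvPolynomial (Fin n) ℂ) (RatFunField n) with hφdef
  -- translation automorphisms
  set S : MvPolynomial (Fin n) ℂ →ₐ[ℂ] MvPolynomial (Fin n) ℂ := aeval (fun i => if i = 0 then X 0 + C α else X i) with hSdef
  set S' : MvPolynomial (Fin n) ℂ →ₐ[ℂ] MvPolynomial (Fin n) ℂ := aeval (fun i => if i = 0 then X 0 - C α else X i) with hS'def
  have hS'S : ∀ f, S' (S f) = f := by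
    intro f
    have hc : S'.comp S = AlgHom.id ℂ (MvPolynomial (Fin n) ℂ) := by
      apply MvPolynomial.algHom_ext
      intro i
      by_cases h : i = 0
      · subst h
        rw [AlgHom.comp_apply, hSdef, aeval_X, if_pos rfl, map_add, hS'def, aeval_X,
          if_pos rfl, aeval_C, algebraMap_eq]
        simp
      · rw [AlgHom.comp_apply, hSdef, aeval_X, if_neg h, hS'def, aeval_X, if_neg h,
          AlgHom.id_apply]
    calc S' (S f) = (S'.comp S) f := rfl
    _ = f := by rw [hc]; rfl
  have hSS' : ∀ f, S (S' f) = f := by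
    intro f
    have hc : S.comp S' = AlgHom.id ℂ (MvPolynomial (Fin n) ℂ) := by
      apply MvPolynomial.algHom_ext
      intro i
      by_cases h : i = 0
      · subst h
        rw [AlgHom.comp_apply, hS'def, aeval_X, if_pos rfl, map_sub, hSdef, aeval_X,
          if_pos rfl, aeval_C, algebraMap_eq]
        simp
      · rw [AlgHom.comp_apply, hS'def, aeval_X, if_neg h, hSdef, aeval_X, if_neg h,
          AlgHom.id_apply]
    calc S (S' f) = (S.comp S') f := rfl
    _ = f := by rw [hc]; rfl
  set ψ : MvPolynomial (Fin n) ℂ →ₐ[ℂ] RatFunField n := φ.comp S' with hψdef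
  have hφinj : Function.Injective φ := IsFractionRing.injective (MvPolynomial (Fin n) ℂ) (RatFunField n)
  have hψinj : Function.Injective ψ := by
    intro x y hxy
    have h1 : S' x = S' y := hφinj hxy
    have := congrArg S h1
    rwa [hSS', hSS'] at this
  -- the translated polynomial vector field
  set q' : Polynomial ℂ := Polynomial.taylor α p - Polynomial.C (ξ 0) * Polynomial.X with hq'def
  have hq'0 : q'.coeff 0 = 0 := by
    simp [hq'def, Polynomial.taylor_coeff_zero, Polynomial.coeff_C_mul, hα]
  have hq'1 : q'.coeff 1 = 0 := by
    simp [hq'def, Polynomial.taylor_coeff_one, Polynomial.coeff_C_mul, hξ0]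
  set q : MvPolynomial (Fin n) ℂ := Polynomial.aeval (X 0 : MvPolynomial (Fin n) ℂ) q' with hqdef
  have hq : OrdGE 2 q := ordGE_aeval hq'0 hq'1
  set Δ₀ : Derivation ℂ (MvPolynomial (Fin n) ℂ) (MvPolynomial (Fin n) ℂ) := mkDerivation ℂ (fun i => C (ξ i) * X i) with hΔ₀def
  set Δ₁ : Derivation ℂ (MvPolynomial (Fin n) ℂ) (MvPolynomial (Fin n) ℂ) := mkDerivation ℂ (fun i => if i = 0 then q else 0) with hΔ₁def
  set Δ : Derivation ℂ (MvPolynomial (Fin n) ℂ) (MvPolynomial (Fin n) ℂ) := Δ₀ + Δ₁ with hΔdef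
  have hΔapply : ∀ f, Δ f = Δ₀ f + Δ₁ f := fun f => rfl
  have hΔX0 : Δ (X 0) = Polynomial.aeval (X 0 : MvPolynomial (Fin n) ℂ) (Polynomial.taylor α p) := by
    rw [hΔapply, hΔ₀def, hΔ₁def, mkDerivation_X, mkDerivation_X, if_pos rfl, hqdef, hq'def]
    rw [map_sub, map_mul, Polynomial.aeval_C, Polynomial.aeval_X, algebraMap_eq]
    ring
  have hΔXi : ∀ i : Fin n, i ≠ 0 → Δ (X i) = C (ξ i) * X i := by
    intro i hi
    rw [hΔapply, hΔ₀def, hΔ₁def, mkDerivation_X, mkDerivation_X, if_neg hi, add_zero]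
  -- generator computation
  have hgen : ∀ i, D (ψ (X i)) = ψ (Δ (X i)) := by
    intro i
    by_cases h : i = 0
    · subst h
      have hψX : ψ (X 0) = φ (X 0) - algebraMap ℂ (RatFunField n) α := by
        rw [hψdef]
        show φ (S' (X 0)) = _
        rw [hS'def, aeval_X, if_pos rfl, map_sub]
        congr 1
      have hL : D (ψ (X 0)) = φ (Polynomial.aeval (X 0 : MvPolynomial (Fin n) ℂ) p) := by
        rw [hψX, map_sub, Derivation.map_algebraMap, sub_zero]
        exact hD0
      rw [hL, hΔX0]
      rw [← Polynomial.aeval_algHom_apply ψ (X 0) (Polynomial.taylor α p)]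
      rw [Polynomial.taylor_apply, Polynomial.aeval_comp]
      have : (Polynomial.aeval (ψ (X 0))) (Polynomial.X + Polynomial.C α) = φ (X 0) := by
        rw [map_add, Polynomial.aeval_X, Polynomial.aeval_C, hψX]
        ring
      rw [this]
      exact (Polynomial.aeval_algHom_apply φ (X 0) p).symm
    · have hψX : ψ (X i) = φ (X i) := by
        rw [hψdef]
        show φ (S' (X i)) = _
        rw [hS'def, aeval_X, if_neg h]
      have hCψ : ψ (C (ξ i)) = algebraMap ℂ (RatFunField n) (ξ i) := by
        rw [← algebraMap_eq]
        exact ψ.commutes (ξ i)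
      have hψX' : ψ (X i) = algebraMap (MvPolynomial (Fin n) ℂ) (RatFunField n) (X i) := hψX
      rw [hψX', hDi i h, hΔXi i h, map_mul, hCψ, hψX']
      exact Algebra.smul_def (ξ i) ((algebraMap (MvPolynomial (Fin n) ℂ) (RatFunField n)) (X i))
  -- transfer
  have htrans : ∀ f, D (ψ f) = ψ (Δ f) := by
    intro f
    induction f using MvPolynomial.induction_on with
    | C a =>
      have h1 : ψ (C a) = algebraMap ℂ (RatFunField n) a := by
        rw [← algebraMap_eq]; exact ψ.commutes a
      have h2 : Δ (C a) = 0 := by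
        rw [show (C a : MvPolynomial (Fin n) ℂ) = algebraMap ℂ _ a from (algebraMap_eq ℂ (Fin n)).symm ▸ rfl]
        exact Derivation.map_algebraMap Δ a
      rw [h1, Derivation.map_algebraMap, h2, map_zero]
    | add f g hf hg => rw [map_add, map_add, map_add, map_add, hf, hg]
    | mul_X f i hf =>
      simp only [map_mul, Derivation.leibniz, smul_eq_mul, map_add, hf, hgen i]
  -- reduced fraction for F
  obtain ⟨a₀, b₀, hrel, hmk⟩ :=
    IsFractionRing.exists_reduced_fraction (MvPolynomial (Fin n) ℂ) F
  have hFb : F * algebraMap (MvPolynomial (Fin n) ℂ) (RatFunField n) (b₀ : MvPolynomial (Fin n) ℂ)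
      = algebraMap (MvPolynomial (Fin n) ℂ) (RatFunField n) a₀ := by
    have h := IsLocalization.mk'_spec (RatFunField n) a₀ b₀
    rw [hmk] at h
    exact h
  set a : MvPolynomial (Fin n) ℂ := S a₀ with hadef
  set b : MvPolynomial (Fin n) ℂ := S (b₀ : MvPolynomial (Fin n) ℂ) with hbdef
  have hψa : ψ a = algebraMap (MvPolynomial (Fin n) ℂ) (RatFunField n) a₀ := by
    rw [hψdef, hadef, AlgHom.comp_apply, hS'S]
    rfl
  have hψb : ψ b = algebraMap (MvPolynomial (Fin n) ℂ) (RatFunField n)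
      (b₀ : MvPolynomial (Fin n) ℂ) := by
    rw [hψdef, hbdef, AlgHom.comp_apply, hS'S]
    rfl
  have hψbne : ψ b ≠ 0 := by
    rw [hψb]
    exact IsFractionRing.to_map_ne_zero_of_mem_nonZeroDivisors b₀.2
  have hψFb : F * ψ b = ψ a := by rw [hψa, hψb]; exact hFb
  by_cases ha₀ : a₀ = 0
  · refine ⟨0, ?_⟩
    rw [map_zero]
    have : F * ψ b = 0 := by rw [hψFb, hadef, ha₀, map_zero, map_zero]
    exact (mul_eq_zero.mp this).resolve_right hψbne
  · have ha : a ≠ 0 := by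
      intro h
      apply ha₀
      have := congrArg S' h
      rw [hS'S, map_zero] at this
      exact this
    have hb : b ≠ 0 := by
      intro h
      have := congrArg S' h
      rw [hS'S, map_zero] at this
      exact nonZeroDivisors.coe_ne_zero b₀ this
    have hrel' : IsRelPrime a b := by
      intro e hea heb
      have h1 : S' e ∣ a₀ := by
        have := map_dvd S' hea
        rwa [hS'S] at this
      have h2 : S' e ∣ (b₀ : MvPolynomial (Fin n) ℂ) := by
        have := map_dvd S' heb
        rwa [hS'S] at this
      have hu := hrel h1 h2
      have := hu.map S
      rwa [hSS'] at this
    -- the Darboux relation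
    have e1 : ψ (Δ a) = F * ψ (Δ b) := by
      rw [← htrans, ← htrans]
      calc D (ψ a) = D (F * ψ b) := by rw [hψFb]
      _ = F • D (ψ b) + ψ b • D F := Derivation.leibniz D F (ψ b)
      _ = F * D (ψ b) := by rw [hF, smul_zero, add_zero, smul_eq_mul]
    have hrelR : Δ a * b = a * Δ b := by
      apply hψinj
      rw [map_mul, map_mul, e1, ← hψFb]
      ring
    have hdvd : b ∣ a * Δ b := ⟨Δ a, by rw [← hrelR]; ring⟩
    obtain ⟨Λ, hΛ⟩ := (hrel'.symm).dvd_of_dvd_mul_left hdvd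
    have hDb : Δ b = Λ * b := by rw [hΛ]; ring
    have hDa2 : Δ a = Λ * a := by
      apply mul_right_cancel₀ hb
      rw [hrelR, hDb]
      ring
    obtain ⟨ma, hma, hlam_a⟩ := core (ξ := ξ) hq ha (by rw [← hΔapply]; exact hDa2)
    obtain ⟨mb, hmb, hlam_b⟩ := core (ξ := ξ) hq hb (by rw [← hΔapply]; exact hDb)
    have hmab : mb = ma := mlam_inj hindep (hlam_b.trans hlam_a.symm)
    subst hmab
    set cc : ℂ := coeff mb a / coeff mb b with hccdef
    set a' : MvPolynomial (Fin n) ℂ := a - C cc * b with ha'def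
    have hΔa' : Δ a' = Λ * a' := by
      have h0 : Δ (C cc) = 0 := by
        rw [show (C cc : MvPolynomial (Fin n) ℂ) = algebraMap ℂ _ cc from
          (algebraMap_eq ℂ (Fin n)).symm ▸ rfl]
        exact Derivation.map_algebraMap Δ cc
      have hΔCb : Δ (C cc * b) = C cc * Δ b := by
        rw [Derivation.leibniz, h0, smul_eq_mul, smul_eq_mul, mul_zero, add_zero]
      rw [ha'def, map_sub, hΔCb, hDa2, hDb]
      ring
    by_cases ha' : a' = 0
    · have hab : a = C cc * b := by rwa [ha'def, sub_eq_zero] at ha'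
      refine ⟨cc, ?_⟩
      have hψCc : ψ (C cc) = algebraMap ℂ (RatFunField n) cc := by
        rw [← algebraMap_eq]
        exact ψ.commutes cc
      apply mul_right_cancel₀ hψbne
      rw [hψFb, hab, map_mul, hψCc]
    · exfalso
      obtain ⟨m', hm', hlam'⟩ := core (ξ := ξ) hq ha' (by rw [← hΔapply]; exact hΔa')
      have hmm : m' = mb := mlam_inj hindep (hlam'.trans hlam_b.symm)
      subst hmm
      apply hm'
      rw [ha'def, coeff_sub, coeff_C_mul, hccdef,
        div_mul_cancel₀ (coeff m' a) hmb, sub_self]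
end

section
/- Let D = p(X₁)∂_{X₁} + ξ₂X₂∂_{X₂} + ··· + ξₙXₙ∂_{Xₙ} with p ∈ ℂ[X₁] of degree d ≥ 1 and ξᵢ ∈ ℂ*. If g is the cofactor of any Darboux polynomial of D, then g is a polynomial in X₁ alone of degree at most d − 1; consequently the cofactors lie in a ℂ-vector space of dimension d. -/
open MvPolynomial

private lemma my_degreeOf_monomial_le {σ : Type*} (s : σ →₀ ℕ) (i : σ) (a : ℂ) :
    degreeOf i (monomial s a : MvPolynomial σ ℂ) ≤ s i := by
  classical
  by_cases h : a = 0
  · simp [h]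
  · rw [degreeOf_monomial_eq s i h]

private lemma my_degreeOf_aeval_le {σ : Type*} [DecidableEq σ] (p : Polynomial ℂ) (j i : σ) :
    degreeOf i (Polynomial.aeval (X j : MvPolynomial σ ℂ) p)
      ≤ if i = j then p.natDegree else 0 := by
  rw [Polynomial.aeval_eq_sum_range]
  refine (degreeOf_sum_le _ _ _).trans (Finset.sup_le fun k hk => ?_)
  rw [smul_eq_C_mul]
  refine (degreeOf_mul_le _ _ _).trans ?_
  rw [degreeOf_C, X_pow_eq_monomial]
  refine le_trans (by simpa using my_degreeOf_monomial_le (Finsupp.single j k) i 1) ?_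
  rw [Finsupp.single_apply]
  by_cases h : i = j
  · simp only [h, if_pos rfl]
    exact Nat.lt_succ_iff.mp (Finset.mem_range.mp hk)
  · simp [h, Ne.symm h]

private lemma degreeOf0_mul_eq {m : ℕ} (f g : MvPolynomial (Fin (m+1)) ℂ)
    (hf : f ≠ 0) (hg : g ≠ 0) :
    degreeOf 0 (f * g) = degreeOf 0 f + degreeOf 0 g := by
  have hf' : finSuccEquiv ℂ m f ≠ 0 := fun h0 => hf <| by
    simpa using (finSuccEquiv ℂ m).injective (h0.trans (map_zero _).symm)
  have hg' : finSuccEquiv ℂ m g ≠ 0 := fun h0 => hg <| by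
    simpa using (finSuccEquiv ℂ m).injective (h0.trans (map_zero _).symm)
  have h := natDegree_finSuccEquiv (R := ℂ) (f * g)
  rw [map_mul, Polynomial.natDegree_mul hf' hg', natDegree_finSuccEquiv,
    natDegree_finSuccEquiv] at h
  exact h.symm

private lemma my_degreeOf_mul_eq {m : ℕ} (i : Fin (m+1)) (f g : MvPolynomial (Fin (m+1)) ℂ)
    (hf : f ≠ 0) (hg : g ≠ 0) :
    degreeOf i (f * g) = degreeOf i f + degreeOf i g := by
  classical
  set e := Equiv.swap (0 : Fin (m+1)) i with he
  have key : ∀ h : MvPolynomial (Fin (m+1)) ℂ,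
      degreeOf i h = degreeOf 0 (rename e h) := by
    intro h
    have := degreeOf_rename_of_injective (p := h) e.injective i
    rw [he] at this ⊢
    rw [Equiv.swap_apply_right] at this
    exact this.symm
  have hfr : rename (e : Fin (m+1) → Fin (m+1)) f ≠ 0 := fun h0 => hf <| by
    have := rename_injective (R := ℂ) (e : Fin (m+1) → Fin (m+1)) e.injective
    exact this (by simpa using h0)
  have hgr : rename (e : Fin (m+1) → Fin (m+1)) g ≠ 0 := fun h0 => hg <| by
    have := rename_injective (R := ℂ) (e : Fin (m+1) → Fin (m+1)) e.injective
    exact this (by simpa using h0)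
  rw [key, key, key, map_mul, degreeOf0_mul_eq _ _ hfr hgr]


-- the key bound on the derivation
private lemma degreeOf_D_le {m d : ℕ} (p : Polynomial ℂ) (hdeg : p.natDegree = d) (hd : 1 ≤ d)
    (ξ : Fin (m+1) → ℂ)
    (f : MvPolynomial (Fin (m+1)) ℂ) (i : Fin (m+1)) :
    degreeOf i (mkDerivation ℂ
        (fun j => if j = 0 then (Polynomial.aeval (X 0) p : MvPolynomial (Fin (m+1)) ℂ)
          else C (ξ j) * X j) f)
      ≤ degreeOf i f + (if i = 0 then d - 1 else 0) := by
  classical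
  set v : Fin (m+1) → MvPolynomial (Fin (m+1)) ℂ :=
    fun j => if j = 0 then (Polynomial.aeval (X 0) p : MvPolynomial (Fin (m+1)) ℂ)
      else C (ξ j) * X j with hv
  conv_lhs => rw [f.as_sum, map_sum]
  refine (degreeOf_sum_le _ _ _).trans (Finset.sup_le fun s hs => ?_)
  have hsi : s i ≤ degreeOf i f := monomial_le_degreeOf i hs
  rw [mkDerivation_monomial, smul_eq_C_mul]
  refine (degreeOf_mul_le _ _ _).trans ?_
  rw [degreeOf_C, Finsupp.sum, zero_add]
  refine (degreeOf_sum_le _ _ _).trans (Finset.sup_le fun j hj => ?_)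
  have hsj : 1 ≤ s j := Nat.pos_of_ne_zero (Finsupp.mem_support_iff.mp hj)
  rw [smul_eq_mul]
  refine (degreeOf_mul_le _ _ _).trans ?_
  have h1 : degreeOf i (monomial (s - Finsupp.single j 1) ((s j : ℂ))) 
      ≤ s i - (if j = i then 1 else 0) := by
    refine (my_degreeOf_monomial_le _ _ _).trans ?_
    rw [Finsupp.tsub_apply, Finsupp.single_apply]
  by_cases hj0 : j = 0
  · subst hj0
    have h2 : degreeOf i (v 0) ≤ if i = 0 then d else 0 := by
      rw [hv]; simpa [hdeg] using my_degreeOf_aeval_le p (0 : Fin (m+1)) i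
    by_cases hi0 : i = 0
    · subst hi0
      rw [if_pos rfl] at h1 h2 ⊢
      omega
    · rw [if_neg hi0] at h2 ⊢
      rw [if_neg (fun h => hi0 h.symm)] at h1
      omega
  · have h2 : degreeOf i (v j) ≤ if i = j then 1 else 0 := by
      have hvj : v j = C (ξ j) * X j := by simp only [hv, if_neg hj0]
      rw [hvj]
      refine (degreeOf_mul_le _ _ _).trans ?_
      rw [degreeOf_C, degreeOf_X, zero_add]
    by_cases hij : i = j
    · subst hij
      rw [if_pos rfl] at h1 h2
      rw [if_neg hj0]
      omega
    · rw [if_neg hij] at h2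
      rw [if_neg (fun h => hij h.symm)] at h1
      by_cases hi0 : i = 0
      · rw [if_pos hi0]; omega
      · rw [if_neg hi0]; omega

/-- for D = p(X₁)∂_{X₁} + Σ_{i≥2} ξᵢXᵢ∂_{Xᵢ} with deg p = d ≥ 1 and
ξᵢ ≠ 0, every cofactor of a Darboux polynomial is a polynomial in X₁ alone of degree
at most d − 1; consequently all cofactors lie in a ℂ-vector space of dimension d. -/
theorem cofactor_univariate_of_product_system {n d : ℕ} [NeZero n]
    (p : Polynomial ℂ) (hdeg : p.natDegree = d) (hd : 1 ≤ d)
    (ξ : Fin n → ℂ) (hξ : ∀ i : Fin n, i ≠ 0 → ξ i ≠ 0)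
    (D : Derivation ℂ (MvPolynomial (Fin n) ℂ) (MvPolynomial (Fin n) ℂ))
    (hD0 : D (X 0) = Polynomial.aeval (X 0) p)
    (hDi : ∀ i : Fin n, i ≠ 0 → D (X i) = MvPolynomial.C (ξ i) * X i) :
    (∀ f g : MvPolynomial (Fin n) ℂ, f ≠ 0 → D f = g * f →
      ∃ q : Polynomial ℂ, q.natDegree ≤ d - 1 ∧ g = Polynomial.aeval (X 0) q) ∧
    ∃ V : Submodule ℂ (MvPolynomial (Fin n) ℂ), Module.finrank ℂ V = d ∧
      ∀ f g : MvPolynomial (Fin n) ℂ, f ≠ 0 → D f = g * f → g ∈ V := by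
  classical
  obtain ⟨m, rfl⟩ : ∃ m, n = m + 1 := ⟨n - 1, (Nat.succ_pred_eq_of_pos (NeZero.pos n)).symm⟩
  set v : Fin (m+1) → MvPolynomial (Fin (m+1)) ℂ :=
    fun j => if j = 0 then (Polynomial.aeval (X 0) p) else C (ξ j) * X j with hv
  have hDv : D = mkDerivation ℂ v := by
    apply derivation_ext
    intro i
    by_cases h : i = 0
    · subst h; rw [mkDerivation_X]; simp only [hv, if_pos rfl]; exact hD0
    · rw [mkDerivation_X]; simp only [hv, if_neg h]; exact hDi i h
  have main : ∀ f g : MvPolynomial (Fin (m+1)) ℂ, f ≠ 0 → D f = g * f →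
      ∃ q : Polynomial ℂ, q.natDegree ≤ d - 1 ∧ g = Polynomial.aeval (X 0) q := by
    intro f g hf hfg
    by_cases hg : g = 0
    · exact ⟨0, by simp, by simp [hg]⟩
    have hbound : ∀ i, degreeOf i g ≤ if i = 0 then d - 1 else 0 := by
      intro i
      have h1 := my_degreeOf_mul_eq i g f hg hf
      have h2 : degreeOf i (D f) ≤ degreeOf i f + (if i = 0 then d - 1 else 0) := by
        rw [hDv]; exact degreeOf_D_le p hdeg hd ξ f i
      rw [hfg, h1] at h2
      omega
    have hα : ∀ α ∈ g.support, α = Finsupp.single (0 : Fin (m+1)) (α 0) := by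
      intro α hαs
      ext i
      by_cases hi : i = 0
      · subst hi; simp
      · have h3 := monomial_le_degreeOf i (f := g) hαs
        have hb := hbound i
        rw [if_neg hi] at hb
        rw [Finsupp.single_apply, if_neg (fun h => hi h.symm)]
        omega
    have key : ∀ (α : Fin (m+1) →₀ ℕ) (c : ℂ), α = Finsupp.single 0 (α 0) →
        (monomial α c : MvPolynomial (Fin (m+1)) ℂ) = C c * X 0 ^ (α 0) := by
      intro α c h
      rw [X_pow_eq_monomial, C_mul_monomial, mul_one]
      exact congrArg (fun t => monomial t c) h
    refine ⟨∑ α ∈ g.support, Polynomial.C (coeff α g) * Polynomial.X ^ (α 0), ?_, ?_⟩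
    · refine Polynomial.natDegree_sum_le_of_forall_le _ _ fun α hαs => ?_
      refine (Polynomial.natDegree_C_mul_le _ _).trans ?_
      rw [Polynomial.natDegree_X_pow]
      have h3 := monomial_le_degreeOf (0 : Fin (m+1)) (f := g) hαs
      have hb := hbound 0
      rw [if_pos rfl] at hb
      omega
    · rw [map_sum]
      conv_lhs => rw [g.as_sum]
      refine Finset.sum_congr rfl fun α hαs => ?_
      rw [map_mul, Polynomial.aeval_C, map_pow, Polynomial.aeval_X]
      rw [key α (coeff α g) (hα α hαs)]
      rfl
  refine ⟨main, ?_⟩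
  set L := (Polynomial.aeval (R := ℂ) (X 0 : MvPolynomial (Fin (m+1)) ℂ)).toLinearMap with hL
  have hinj : Function.Injective L := by
    have hleft : ∀ q : Polynomial ℂ,
        (aeval (R := ℂ) (fun i : Fin (m+1) => if i = 0 then (Polynomial.X : Polynomial ℂ) else 1))
          (Polynomial.aeval (X 0) q) = q := by
      intro q
      rw [← Polynomial.aeval_algHom_apply]
      simp
    intro a b hab
    have h2 := congrArg
      (aeval (R := ℂ) (fun i : Fin (m+1) => if i = 0 then (Polynomial.X : Polynomial ℂ) else 1)) hab
    simp only [hL, AlgHom.toLinearMap_apply] at h2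
    rwa [hleft, hleft] at h2
  refine ⟨Submodule.map L (Polynomial.degreeLT ℂ d), ?_, ?_⟩
  · rw [← (Submodule.equivMapOfInjective L hinj (Polynomial.degreeLT ℂ d)).finrank_eq,
      (Polynomial.degreeLTEquiv ℂ d).finrank_eq]
    exact Module.finrank_fin_fun ℂ
  · intro f g hf hfg
    obtain ⟨q, hq1, hq2⟩ := main f g hf hfg
    have hmem : q ∈ Polynomial.degreeLT ℂ d := by
      rw [Polynomial.mem_degreeLT]
      by_cases hq0 : q = 0
      · rw [hq0, Polynomial.degree_zero]
        exact WithBot.bot_lt_coe d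
      · exact (Polynomial.natDegree_lt_iff_degree_lt hq0).mp (by omega)
    exact Submodule.mem_map.mpr ⟨q, hmem, by simp [hL, hq2.symm]⟩
end
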